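/- I(0) = 0, and I(t) = 0 for every real t ≥ 2. -/

import Mathlib

open MeasureTheory Real intervalIntegral

/-- `log⁺ r = log (max 1 r)`. -/
noncomputable def logPlus (r : ℝ) : ℝ := Real.log (max 1 r)

/-- `I(t) = ∫₀¹ log⁺ |t + e^{2πiθ}| dθ − log⁺ t`. -/
noncomputable def Ifun (t : ℝ) : ℝ :=
  (∫ θ in (0:ℝ)..1, logPlus (‖(t + Complex.exp (2 * Real.pi * Complex.I * θ))‖))
    - logPlus t

lemma slit_mem {t : ℝ} (ht : 2 ≤ t) {z : ℂ} (hz : ‖z‖ ≤ 1) :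
    (t : ℂ) + z ∈ Complex.slitPlane := by
  rw [Complex.mem_slitPlane_iff]
  left
  have hzre : |z.re| ≤ 1 := (Complex.abs_re_le_norm z).trans hz
  have : -1 ≤ z.re := by cases abs_le.mp hzre; linarith
  simp only [Complex.add_re, Complex.ofReal_re]
  linarith

lemma one_le_abs {t : ℝ} (ht : 2 ≤ t) {z : ℂ} (hz : ‖z‖ = 1) :
    1 ≤ ‖(t : ℂ) + z‖ := by
  have h := norm_sub_norm_le ((t : ℂ)) (-z)
  rw [sub_neg_eq_add, norm_neg] at h
  simp only [hz, Complex.norm_real, Real.norm_eq_abs] at h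
  rw [abs_of_nonneg (by linarith : (0:ℝ) ≤ t)] at h
  linarith

lemma key {t : ℝ} (ht : 2 ≤ t) :
    (∫ θ in (0:ℝ)..(2*π),
        Real.log ‖(t : ℂ) + Complex.exp (θ * Complex.I)‖)
      = 2 * π * Real.log t := by
  set f : ℂ → ℂ := fun z => Complex.log ((t : ℂ) + z) with hf
  have hdiff : DiffContOnCl ℂ f (Metric.ball (0:ℂ) 1) := by
    apply DifferentiableOn.diffContOnCl
    intro z hz
    rw [closure_ball (0:ℂ) one_ne_zero, Metric.mem_closedBall, dist_zero_right] at hz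
    exact ((Complex.differentiableAt_log (slit_mem ht hz)).comp z
      ((differentiableAt_const _).add differentiableAt_id)).differentiableWithinAt
  have cauchy := hdiff.circleIntegral_sub_inv_smul (Metric.mem_ball_self one_pos) (w := 0)
  -- rewrite the circle integral as an interval integral
  rw [circleIntegral] at cauchy
  have hintegrand : ∀ θ : ℝ,
      deriv (circleMap 0 1) θ • ((circleMap 0 1 θ - 0)⁻¹ • f (circleMap 0 1 θ))
        = Complex.I * Complex.log ((t : ℂ) + Complex.exp (θ * Complex.I)) := by
    intro θ
    have hne : circleMap 0 1 θ ≠ 0 := circleMap_ne_center one_ne_zero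
    rw [deriv_circleMap]
    simp only [smul_eq_mul, sub_zero, hf]
    have hcm : circleMap 0 1 θ = Complex.exp (θ * Complex.I) := by
      simp [circleMap]
    field_simp [hne]
    rw [hcm]
    ring
  simp only [hintegrand] at cauchy
  rw [intervalIntegral.integral_const_mul] at cauchy
  have hf0 : f 0 = Complex.log t := by simp [hf]
  rw [hf0] at cauchy
  have hI : (2 * ↑π * Complex.I : ℂ) • Complex.log (t:ℂ)
      = Complex.I * (2 * ↑π * Complex.log (t:ℂ)) := by
    rw [smul_eq_mul]; ring
  rw [hI] at cauchy
  have hc : (∫ θ in (0:ℝ)..(2*π), Complex.log ((t : ℂ) + Complex.exp (θ * Complex.I)))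
      = 2 * ↑π * Complex.log (t:ℂ) := mul_left_cancel₀ Complex.I_ne_zero cauchy
  -- integrability / continuity
  have hcont : Continuous fun θ : ℝ => Complex.log ((t : ℂ) + Complex.exp (θ * Complex.I)) := by
    rw [continuous_iff_continuousAt]
    intro θ
    have h1 : ContinuousAt (fun θ : ℝ => (t : ℂ) + Complex.exp (θ * Complex.I)) θ := by
      fun_prop
    have h2 : ContinuousAt Complex.log ((t : ℂ) + Complex.exp ((θ:ℂ) * Complex.I)) :=
      continuousAt_clog (slit_mem ht (le_of_eq (Complex.norm_exp_ofReal_mul_I θ)))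
    exact ContinuousAt.comp (x := θ) (f := fun θ : ℝ => (t:ℂ) + Complex.exp ((θ:ℂ) * Complex.I)) h2 h1
  have hint : IntervalIntegrable
      (fun θ : ℝ => Complex.log ((t : ℂ) + Complex.exp (θ * Complex.I))) volume 0 (2*π) :=
    hcont.intervalIntegrable 0 (2*π)
  have hre := Complex.reCLM.intervalIntegral_comp_comm hint
  rw [hc] at hre
  have : (∫ θ in (0:ℝ)..(2*π),
      Complex.reCLM (Complex.log ((t : ℂ) + Complex.exp (θ * Complex.I))))
      = 2 * π * Real.log t := by
    rw [hre]
    have : Complex.log (t:ℂ) = ((Real.log t : ℝ) : ℂ) :=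
      (Complex.ofReal_log (by linarith)).symm
    rw [this]
    simp [Complex.ofReal_mul]
  rw [← this]
  apply intervalIntegral.integral_congr
  intro θ _
  simp [Complex.log_re]

theorem stmt2 : Ifun 0 = 0 ∧ ∀ t : ℝ, 2 ≤ t → Ifun t = 0 := by
  constructor
  · unfold Ifun
    have h : ∀ θ : ℝ,
        logPlus ‖(0:ℝ) + Complex.exp (2 * Real.pi * Complex.I * θ)‖ = 0 := by
      intro θ
      have he : (2 * Real.pi * Complex.I * θ) = ((2 * Real.pi * θ : ℝ) : ℂ) * Complex.I := by
        push_cast; ring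
      rw [Complex.ofReal_zero, zero_add, he, Complex.norm_exp_ofReal_mul_I]
      simp [logPlus]
    simp only [h]
    simp [logPlus]
  · intro t ht
    unfold Ifun
    have habs : ∀ θ : ℝ,
        ‖(t:ℝ) + Complex.exp (2 * Real.pi * Complex.I * θ)‖
          = ‖(t : ℂ) + Complex.exp (((2 * Real.pi * θ : ℝ) : ℂ) * Complex.I)‖ := by
      intro θ
      congr 2
      push_cast; ring
    have hlp : (∫ θ in (0:ℝ)..1,
        logPlus ‖(t:ℝ) + Complex.exp (2 * Real.pi * Complex.I * θ)‖)
        = ∫ θ in (0:ℝ)..1,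
          (fun x : ℝ => Real.log ‖(t : ℂ) + Complex.exp ((x:ℂ) * Complex.I)‖)
            (2 * Real.pi * θ) := by
      apply intervalIntegral.integral_congr
      intro θ _
      have h1 : 1 ≤ ‖(t : ℂ) + Complex.exp (((2 * Real.pi * θ : ℝ) : ℂ) * Complex.I)‖ :=
        one_le_abs ht (Complex.norm_exp_ofReal_mul_I _)
      beta_reduce
      unfold logPlus
      rw [habs θ, max_eq_right h1]
    have hsub := intervalIntegral.integral_comp_mul_left
      (a := 0) (b := 1)
      (fun x : ℝ => Real.log ‖(t : ℂ) + Complex.exp ((x:ℂ) * Complex.I)‖)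
      (show (2:ℝ) * Real.pi ≠ 0 by positivity)
    simp only [mul_zero, mul_one] at hsub
    rw [hlp, hsub, key ht]
    have hπ : (2 * Real.pi)⁻¹ • (2 * π * Real.log t) = Real.log t := by
      rw [smul_eq_mul]
      field_simp
    rw [hπ, logPlus, max_eq_right (by linarith : (1:ℝ) ≤ t), sub_self]
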